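/- Let m ∉ {1, −1, −3} and take ρ = 0 and λ = 0. Let b, b', X be real numbers with b ≠ 0, set a := ((m−1)/(2(m+1)))·b and a' := ((m−1)/(2(m+1)))·b', and suppose the structure equations (E1) and (E2) hold. Then X = 0 and b' + (3/2)b² = 0. -/

import Mathlib

/-- Let m ∉ {1, −1, −3} and take ρ = 0 and λ = 0.  Let b, b', X be
real numbers with b ≠ 0, set a := ((m−1)/(2(m+1)))·b and a' := ((m−1)/(2(m+1)))·b',
and suppose the structure equations (E1) and (E2) hold.  Then X = 0 and
b' + (3/2)b² = 0. -/
theorem stmt_11 (m ρ lam a b a' b' X : ℝ)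
    (hm1 : m ≠ 1) (hm1' : m ≠ -1) (hm3 : m ≠ -3)
    (hρ : ρ = 0) (hlam : lam = 0)
    (hb : b ≠ 0)
    (ha : a = (m - 1) / (2 * (m + 1)) * b)
    (ha' : a' = (m - 1) / (2 * (m + 1)) * b')
    (hE1 : (m + 1) * a' + (m + 1) * a ^ 2 - (m + 1) * b' - (m + 2) * b ^ 2 + a * b - X = 0)
    (hE2 : (a - b) * (ρ * (2 * a ^ 2 + 4 * a * b + 6 * b ^ 2 + 2 * X + 2 * a' + 4 * b') - lam)
        = a * X + a * b' - a' * b) :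
    X = 0 ∧ b' + (3 / 2) * b ^ 2 = 0 := by
  have hm1n : m - 1 ≠ 0 := sub_ne_zero.mpr hm1
  have hm1p : m + 1 ≠ 0 := by intro h; apply hm1'; linarith
  have hm3p : m + 3 ≠ 0 := by intro h; apply hm3; linarith
  subst hρ hlam ha ha'
  have hk : (m - 1) / (2 * (m + 1)) ≠ 0 :=
    div_ne_zero hm1n (mul_ne_zero two_ne_zero hm1p)
  have hX : X = 0 := by
    have h2 : (m - 1) / (2 * (m + 1)) * b * X = 0 := by linear_combination -hE2
    rcases mul_eq_zero.mp h2 with h | h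
    · exact absurd h (mul_ne_zero hk hb)
    · exact h
  refine ⟨hX, ?_⟩
  subst hX
  field_simp at hE1
  have key : 8 * (m + 1) ^ 4 * ((m + 3) * (b' + 3 / 2 * b ^ 2)) = 0 := by
    linear_combination (-4 * (m + 1) ^ 3) * hE1
  have h8 : (8 : ℝ) * (m + 1) ^ 4 ≠ 0 := by positivity
  have key2 : (m + 3) * (b' + 3 / 2 * b ^ 2) = 0 := by
    rcases mul_eq_zero.mp key with h | h
    · exact absurd h h8
    · exact h
  rcases mul_eq_zero.mp key2 with h | h
  · exact absurd h hm3p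
  · exact h
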